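/- Let G be a finite simple chordal graph and v a vertex of G that belongs to some maximal clique of size at least three. Then v is incident on at least two distinct exposed edges of G. -/

import Mathlib

variable {V : Type*}

/-- A maximal clique of `G`: a clique not properly contained in any other clique. -/
def IsMaxClique (G : SimpleGraph V) (s : Set V) : Prop :=
  G.IsClique s ∧ ∀ t : Set V, G.IsClique t → s ⊆ t → t = s

/-- `xy` is a facet edge of `G` if it is an edge and `{x, y}` is a maximal clique. -/
def IsFacetEdge (G : SimpleGraph V) (x y : V) : Prop :=
  G.Adj x y ∧ IsMaxClique G {x, y}

/-- `xy` is an exposed edge of `G` if it is an edge contained in a unique maximal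
clique and it is not a facet edge. -/
def IsExposedEdge (G : SimpleGraph V) (x y : V) : Prop :=
  G.Adj x y ∧ (∃! s : Set V, IsMaxClique G s ∧ x ∈ s ∧ y ∈ s) ∧ ¬ IsFacetEdge G x y

/-- A graph is chordal if every cycle of length at least four has a chord, i.e. an
edge of the graph joining two vertices of the cycle which is not an edge of the cycle. -/
def IsChordal (G : SimpleGraph V) : Prop :=
  ∀ ⦃v : V⦄ (w : G.Walk v v), w.IsCycle → 4 ≤ w.length →
    ∃ a b, a ∈ w.support ∧ b ∈ w.support ∧ G.Adj a b ∧ s(a, b) ∉ w.edges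

/-- `H` is obtained from `G` through an erasure: deletion of a single exposed edge. -/
def Erasure (G H : SimpleGraph V) : Prop :=
  ∃ x y : V, IsExposedEdge G x y ∧ H = G.deleteEdges {s(x, y)}


section ChordalAuxiliary

open SimpleGraph

variable {G : SimpleGraph V}


/-- Reachability inside a vertex set `W`. -/
def ReachIn (G : SimpleGraph V) (W : Set V) (u v : V) : Prop :=
  ∃ p : G.Walk u v, ∀ z ∈ p.support, z ∈ W

namespace ReachIn

lemma refl {W : Set V} {u : V} (h : u ∈ W) : ReachIn G W u u :=
  ⟨Walk.nil, by simpa using h⟩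

lemma mem_left {W : Set V} {u v : V} (h : ReachIn G W u v) : u ∈ W := by
  obtain ⟨p, hp⟩ := h; exact hp u p.start_mem_support

lemma mem_right {W : Set V} {u v : V} (h : ReachIn G W u v) : v ∈ W := by
  obtain ⟨p, hp⟩ := h; exact hp v p.end_mem_support

lemma symm {W : Set V} {u v : V} (h : ReachIn G W u v) : ReachIn G W v u := by
  obtain ⟨p, hp⟩ := h
  exact ⟨p.reverse, fun z hz => hp z (by simpa [Walk.support_reverse] using hz)⟩

lemma trans {W : Set V} {u v w : V} (h : ReachIn G W u v) (h' : ReachIn G W v w) :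
    ReachIn G W u w := by
  obtain ⟨p, hp⟩ := h; obtain ⟨q, hq⟩ := h'
  refine ⟨p.append q, fun z hz => ?_⟩
  rcases (Walk.mem_support_append_iff _ _).1 hz with h | h
  · exact hp z h
  · exact hq z h

lemma step [DecidableEq V] {W : Set V} {u v z : V} (h : ReachIn G W u v) (ha : G.Adj v z) (hz : z ∈ W) :
    ReachIn G W u z := by
  obtain ⟨p, hp⟩ := h
  refine ⟨p.concat ha, fun w hw => ?_⟩
  rw [Walk.support_concat] at hw
  rcases List.mem_append.1 hw with hw | hw
  · exact hp w hw
  · rcases List.mem_singleton.1 hw with rfl; exact hz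

lemma of_mem_support [DecidableEq V] {W : Set V} {u v z : V} (p : G.Walk u v) (hp : ∀ w ∈ p.support, w ∈ W)
    (hz : z ∈ p.support) : ReachIn G W u z :=
  ⟨p.takeUntil z hz, fun w hw => hp w (p.support_takeUntil_subset hz hw)⟩

end ReachIn

/-- Any walk between distinct non-adjacent vertices has an interior vertex. -/
lemma exists_interior {a b : V} (hab : a ≠ b) (hn : ¬ G.Adj a b) (p : G.Walk a b) :
    ∃ z ∈ p.support, z ≠ a ∧ z ≠ b := by
  cases p with
  | nil => exact absurd rfl hab
  | @cons _ c _ h q =>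
    refine ⟨c, by simp [Walk.support_cons, q.start_mem_support], ?_, ?_⟩
    · rintro rfl; exact G.irrefl h
    · rintro rfl; exact hn h

lemma edge_of_length_one {u v : V} {p : G.Walk u v} (h : p.length = 1) :
    s(u, v) ∈ p.edges := by
  cases p with
  | nil => simp at h
  | @cons _ c _ had q =>
    simp only [Walk.length_cons, Nat.add_eq_right] at h
    obtain rfl := Walk.eq_of_length_eq_zero h
    simp

/-- Extract the last step of a nontrivial walk. -/
lemma exists_last_step [DecidableEq V] {u x : V} (hne : u ≠ x) (p : G.Walk u x) :
    ∃ (z : V) (q : G.Walk u z), G.Adj x z ∧ (∀ w ∈ q.support, w ∈ p.support) ∧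
      (p.support.count x = 1 → x ∉ q.support) := by
  obtain ⟨z, h, r, hr⟩ := Walk.exists_eq_cons_of_ne (Ne.symm hne) p.reverse
  have hsup : ∀ w ∈ r.support, w ∈ p.support := by
    intro w hw
    have : w ∈ p.reverse.support := by rw [hr, Walk.support_cons]; exact List.mem_cons_of_mem _ hw
    simpa [Walk.support_reverse] using this
  refine ⟨z, r.reverse, h, ?_, ?_⟩
  · intro w hw
    exact hsup w (by simpa [Walk.support_reverse] using hw)
  · intro hc hx
    have hc' : p.reverse.support.count x = 1 := by
      rw [Walk.support_reverse, List.count_reverse]; exact hc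
    rw [hr, Walk.support_cons, List.count_cons_self] at hc'
    have : x ∈ r.support := by simpa [Walk.support_reverse] using hx
    have := List.count_pos_iff.2 this
    omega


lemma edge_of_length_one' {u v : V} {p : G.Walk u v} (h : p.length = 1) :
    s(u, v) ∈ p.edges := by
  cases p with
  | nil => simp at h
  | @cons _ c _ had q =>
    simp only [Walk.length_cons, Nat.add_eq_right] at h
    obtain rfl := Walk.eq_of_length_eq_zero h
    simp

/-- There is a minimum-length path among walks whose support satisfies `P`. -/
lemma exists_min_walk {x y : V} (P : V → Prop)
    (hne : ∃ p : G.Walk x y, ∀ z ∈ p.support, P z) :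
    ∃ p : G.Walk x y, p.IsPath ∧ (∀ z ∈ p.support, P z) ∧
      ∀ q : G.Walk x y, (∀ z ∈ q.support, P z) → p.length ≤ q.length := by
  classical
  set L : Set ℕ := {n | ∃ p : G.Walk x y, (∀ z ∈ p.support, P z) ∧ p.length = n} with hL
  have hLne : L.Nonempty := by
    obtain ⟨p, hp⟩ := hne
    exact ⟨p.length, p, hp, rfl⟩
  obtain ⟨p, hp, hplen⟩ := Nat.sInf_mem hLne
  have hmin : ∀ q : G.Walk x y, (∀ z ∈ q.support, P z) → sInf L ≤ q.length :=
    fun q hq => Nat.sInf_le ⟨q, hq, rfl⟩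
  have hbp : ∀ z ∈ p.bypass.support, P z := fun z hz => hp z (p.support_bypass_subset hz)
  refine ⟨p.bypass, p.bypass_isPath, hbp, fun q hq => ?_⟩
  calc p.bypass.length ≤ p.length := p.length_bypass_le
    _ = sInf L := hplen
    _ ≤ q.length := hmin q hq

lemma shortcut_mem_edges {x y α β : V} {p : G.Walk x y} (hadj : G.Adj α β)
    (w₁ : G.Walk x α) (w₂ : G.Walk α β) (w₃ : G.Walk β y)
    (hp : p = w₁.append (w₂.append w₃))
    (hmin : ∀ q : G.Walk x y, (∀ z ∈ q.support, z ∈ p.support) → p.length ≤ q.length) :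
    s(α, β) ∈ p.edges := by
  have hsub : ∀ z ∈ (w₁.append (Walk.cons hadj w₃)).support, z ∈ p.support := by
    intro z hz
    rcases (Walk.mem_support_append_iff _ _).1 hz with h | h
    · rw [hp]; exact (Walk.mem_support_append_iff _ _).2 (Or.inl h)
    · rw [Walk.support_cons] at h
      rcases List.mem_cons.1 h with rfl | h
      · rw [hp]
        exact (Walk.mem_support_append_iff _ _).2
          (Or.inr ((Walk.mem_support_append_iff _ _).2 (Or.inl w₂.start_mem_support)))
      · rw [hp]
        exact (Walk.mem_support_append_iff _ _).2
          (Or.inr ((Walk.mem_support_append_iff _ _).2 (Or.inr h)))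
  have hlen := hmin _ hsub
  rw [hp, Walk.length_append, Walk.length_append, Walk.length_append,
    Walk.length_cons] at hlen
  have h2 : w₂.length ≤ 1 := by omega
  interval_cases h : w₂.length
  · exact absurd (Walk.eq_of_length_eq_zero h) hadj.ne
  · have : s(α, β) ∈ w₂.edges := edge_of_length_one' h
    rw [hp]
    rw [Walk.edges_append, Walk.edges_append]
    exact List.mem_append.2 (Or.inr (List.mem_append.2 (Or.inl this)))

/-- A minimum-length walk (w.r.t. a support-closed condition) is induced. -/
lemma mem_edges_of_min [DecidableEq V] {x y α β : V} {p : G.Walk x y}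
    (hmin : ∀ q : G.Walk x y, (∀ z ∈ q.support, z ∈ p.support) → p.length ≤ q.length)
    (hα : α ∈ p.support) (hβ : β ∈ p.support) (hadj : G.Adj α β) :
    s(α, β) ∈ p.edges := by
  have hβ' : β ∈ ((p.takeUntil α hα).append (p.dropUntil α hα)).support := by
    rw [p.take_spec hα]; exact hβ
  rcases (Walk.mem_support_append_iff _ _).1 hβ' with h | h
  · -- β comes before α
    have key : s(β, α) ∈ p.edges := by
      refine shortcut_mem_edges hadj.symm ((p.takeUntil α hα).takeUntil β h)
        ((p.takeUntil α hα).dropUntil β h) (p.dropUntil α hα) ?_ hmin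
      rw [Walk.append_assoc, (p.takeUntil α hα).take_spec h, p.take_spec hα]
    rwa [Sym2.eq_swap] at key
  · refine shortcut_mem_edges hadj (p.takeUntil α hα)
      ((p.dropUntil α hα).takeUntil β h) ((p.dropUntil α hα).dropUntil β h) ?_ hmin
    rw [(p.dropUntil α hα).take_spec h, p.take_spec hα]

/-- `x` is simplicial within the vertex set `W`. -/
def SimpIn (G : SimpleGraph V) (W : Set V) (x : V) : Prop :=
  ∀ ⦃y z : V⦄, y ∈ W → z ∈ W → G.Adj x y → G.Adj x z → y ≠ z → G.Adj y z

lemma sep_min_neighbor [Fintype V] {G : SimpleGraph V} {W S : Set V} {a b x : V}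
    (hsub : S ⊆ W) (haS : a ∉ S) (hbS : b ∉ S)
    (hsep : ¬ ReachIn G (W \ S) a b)
    (hmin : ∀ S' : Set V, S' ⊆ W → a ∉ S' → b ∉ S' → ¬ ReachIn G (W \ S') a b →
      S.ncard ≤ S'.ncard)
    (hx : x ∈ S) : ∃ u, G.Adj x u ∧ ReachIn G (W \ S) a u := by
  classical
  have hne : ¬ ¬ ReachIn G (W \ (S \ {x})) a b := by
    intro h
    have h1 := hmin (S \ {x}) ((Set.diff_subset).trans hsub)
      (fun hc => haS hc.1) (fun hc => hbS hc.1) h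
    have h2 := Set.ncard_diff_singleton_lt_of_mem hx S.toFinite
    omega
  rw [not_not] at hne
  obtain ⟨p, hp⟩ := hne
  have hxp : x ∈ p.support := by
    by_contra hxp
    refine hsep ⟨p, fun z hz => ?_⟩
    have hz' := hp z hz
    refine ⟨hz'.1, fun hzS => ?_⟩
    exact hz'.2 ⟨hzS, fun hmem => hxp (Set.mem_singleton_iff.1 hmem ▸ hz)⟩
  have hax : a ≠ x := fun h => haS (h ▸ hx)
  obtain ⟨z, q, hadj, hqsub, hqx⟩ := exists_last_step hax (p.takeUntil x hxp)
  have hxq := hqx (p.count_support_takeUntil_eq_one hxp)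
  refine ⟨z, hadj, ⟨q, fun w hw => ?_⟩⟩
  have hwp : w ∈ p.support := p.support_takeUntil_subset hxp (hqsub w hw)
  have hw' := hp w hwp
  refine ⟨hw'.1, fun hwS => ?_⟩
  exact hw'.2 ⟨hwS, fun hmem => hxq (Set.mem_singleton_iff.1 hmem ▸ hw)⟩

theorem dirac_aux [Fintype V] {G : SimpleGraph V} (hch : IsChordal G) :
    ∀ (n : ℕ) (W : Set V), W.ncard ≤ n → ¬ G.IsClique W →
      ∃ x y, x ∈ W ∧ y ∈ W ∧ x ≠ y ∧ ¬ G.Adj x y ∧ SimpIn G W x ∧ SimpIn G W y := by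
  classical
  intro n
  induction n with
  | zero =>
    intro W hW hncl
    rw [Nat.le_zero, Set.ncard_eq_zero W.toFinite] at hW
    exact absurd (by simp [hW]) hncl
  | succ n ih =>
    intro W hW hncl
    rw [SimpleGraph.isClique_iff, Set.Pairwise] at hncl
    push_neg at hncl
    obtain ⟨a, haW, b, hbW, hab, hnadj⟩ := hncl
    -- a minimal separator S
    set Seps : Set (Set V) :=
      {S | S ⊆ W ∧ a ∉ S ∧ b ∉ S ∧ ¬ ReachIn G (W \ S) a b} with hSeps
    have hS0 : (W \ {a, b}) ∈ Seps := by
      refine ⟨Set.diff_subset, by simp, by simp, ?_⟩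
      rintro ⟨p, hp⟩
      obtain ⟨z, hz, hza, hzb⟩ := exists_interior hab hnadj p
      have hz' := hp z hz
      rw [Set.mem_diff, Set.mem_diff] at hz'
      push_neg at hz'
      rcases hz'.2 hz'.1 with h | h
      · exact hza h
      · exact hzb h
    have hSne : (Set.ncard '' Seps).Nonempty := ⟨_, ⟨_, hS0, rfl⟩⟩
    obtain ⟨S, hSmem, hScard⟩ := Nat.sInf_mem hSne
    have hSmin : ∀ S' ∈ Seps, S.ncard ≤ S'.ncard := fun S' h =>
      le_of_le_of_eq (le_of_eq_of_le hScard (Nat.sInf_le ⟨S', h, rfl⟩)) rfl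
    obtain ⟨hSW, haS, hbS, hSsep⟩ := hSmem
    set A : Set V := {u | ReachIn G (W \ S) a u} with hAdef
    set B : Set V := {u | ReachIn G (W \ S) b u} with hBdef
    have haA : a ∈ A := ReachIn.refl ⟨haW, haS⟩
    have hbB : b ∈ B := ReachIn.refl ⟨hbW, hbS⟩
    have hAW : ∀ u ∈ A, u ∈ W ∧ u ∉ S := fun u hu => by
      have h := ReachIn.mem_right (W := W \ S) hu; exact ⟨h.1, h.2⟩
    have hBW : ∀ u ∈ B, u ∈ W ∧ u ∉ S := fun u hu => by
      have h := ReachIn.mem_right (W := W \ S) hu; exact ⟨h.1, h.2⟩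
    have hAstep : ∀ u ∈ A, ∀ z, G.Adj u z → z ∈ W → z ∉ S → z ∈ A :=
      fun u hu z ha hz hzs => ReachIn.step hu ha ⟨hz, hzs⟩
    have hBstep : ∀ u ∈ B, ∀ z, G.Adj u z → z ∈ W → z ∉ S → z ∈ B :=
      fun u hu z ha hz hzs => ReachIn.step hu ha ⟨hz, hzs⟩
    have hAB : ∀ u, u ∈ A → u ∈ B → False := fun u hu hv =>
      hSsep (ReachIn.trans hu (ReachIn.symm hv))
    have hABadj : ∀ u ∈ A, ∀ w ∈ B, G.Adj u w → False := by
      intro u hu w hw hadj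
      exact hAB w (hAstep u hu w hadj (hBW w hw).1 (hBW w hw).2) hw
    have hminS : ∀ S' : Set V, S' ⊆ W → a ∉ S' → b ∉ S' → ¬ ReachIn G (W \ S') a b →
        S.ncard ≤ S'.ncard := fun S' h1 h2 h3 h4 => hSmin S' ⟨h1, h2, h3, h4⟩
    -- the separator is a clique
    have hSclique : G.IsClique S := by
      intro x hxS y hyS hxy
      by_contra hnadjxy
      obtain ⟨ua, hxua, huaA⟩ := sep_min_neighbor hSW haS hbS hSsep hminS hxS
      obtain ⟨va, hyva, hvaA⟩ := sep_min_neighbor hSW haS hbS hSsep hminS hyS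
      have hSsep' : ¬ ReachIn G (W \ S) b a := fun h => hSsep h.symm
      have hminS' : ∀ S' : Set V, S' ⊆ W → b ∉ S' → a ∉ S' → ¬ ReachIn G (W \ S') b a →
          S.ncard ≤ S'.ncard := fun S' h1 h2 h3 h4 =>
        hminS S' h1 h3 h2 (fun h => h4 h.symm)
      obtain ⟨ub, hxub, hubB⟩ := sep_min_neighbor hSW hbS haS hSsep' hminS' hxS
      obtain ⟨vb, hyvb, hvbB⟩ := sep_min_neighbor hSW hbS haS hSsep' hminS' hyS
      have hxA : x ∉ A := fun h => (hAW x h).2 hxS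
      have hyA : y ∉ A := fun h => (hAW y h).2 hyS
      have hxB : x ∉ B := fun h => (hBW x h).2 hxS
      have hyB : y ∉ B := fun h => (hBW y h).2 hyS
      have hconn : ∀ (c0 : V) (C : Set V), C = {u | ReachIn G (W \ S) c0 u} →
          ∀ u ∈ C, ∀ w ∈ C, ∃ p : G.Walk u w, ∀ z ∈ p.support, z ∈ C := by
        rintro c0 C rfl u hu w hw
        obtain ⟨p1, hp1⟩ := hu
        obtain ⟨p2, hp2⟩ := hw
        refine ⟨p1.reverse.append p2, fun z hz => ?_⟩
        rcases (Walk.mem_support_append_iff _ _).1 hz with h | h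
        · exact ReachIn.of_mem_support p1 hp1 (by simpa [Walk.support_reverse] using h)
        · exact ReachIn.of_mem_support p2 hp2 h
      -- minimal path through A
      have hPA : ∃ p : G.Walk x y, ∀ z ∈ p.support, z = x ∨ z = y ∨ z ∈ A := by
        obtain ⟨w0, hw0⟩ := hconn a A hAdef ua huaA va hvaA
        refine ⟨Walk.cons hxua (w0.concat hyva.symm), fun z hz => ?_⟩
        rw [Walk.support_cons] at hz
        rcases List.mem_cons.1 hz with rfl | hz
        · exact Or.inl rfl
        rw [Walk.support_concat] at hz
        rcases List.mem_append.1 hz with hz | hz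
        · exact Or.inr (Or.inr (hw0 z hz))
        · exact Or.inr (Or.inl (List.mem_singleton.1 hz))
      have hPB : ∃ q : G.Walk y x, ∀ z ∈ q.support, z = y ∨ z = x ∨ z ∈ B := by
        obtain ⟨w0, hw0⟩ := hconn b B hBdef vb hvbB ub hubB
        refine ⟨Walk.cons hyvb (w0.concat hxub.symm), fun z hz => ?_⟩
        rw [Walk.support_cons] at hz
        rcases List.mem_cons.1 hz with rfl | hz
        · exact Or.inl rfl
        rw [Walk.support_concat] at hz
        rcases List.mem_append.1 hz with hz | hz
        · exact Or.inr (Or.inr (hw0 z hz))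
        · exact Or.inr (Or.inl (List.mem_singleton.1 hz))
      obtain ⟨p, hp_path, hpc, hpmin⟩ := exists_min_walk _ hPA
      obtain ⟨q, hq_path, hqc, hqmin⟩ := exists_min_walk _ hPB
      have hplen2 : 2 ≤ p.length := by
        have h0 : p.length ≠ 0 := fun h0 => hxy (Walk.eq_of_length_eq_zero h0)
        have h1 : p.length ≠ 1 := fun h1 =>
          hnadjxy (p.adj_of_mem_edges (edge_of_length_one h1))
        omega
      have hqlen2 : 2 ≤ q.length := by
        have h0 : q.length ≠ 0 := fun h0 => hxy (Walk.eq_of_length_eq_zero h0).symm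
        have h1 : q.length ≠ 1 := fun h1 =>
          hnadjxy (q.adj_of_mem_edges (edge_of_length_one h1)).symm
        omega
      set c : G.Walk x x := p.append q with hc
      have hclen : c.length = p.length + q.length := Walk.length_append p q
      -- edges of p and q are disjoint
      have hdisj_edges : ∀ e ∈ p.edges, e ∉ q.edges := by
        intro e hep heq
        revert hep heq
        induction e using Sym2.ind with
        | _ u w =>
        intro hep heq
        have hu : u = x ∨ u = y := by
          rcases hpc u (p.fst_mem_support_of_mem_edges hep) with h | h | h
          · exact Or.inl h
          · exact Or.inr h
          · rcases hqc u (q.fst_mem_support_of_mem_edges heq) with h' | h' | h'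
            · exact Or.inr h'
            · exact Or.inl h'
            · exact (hAB u h h').elim
        have hw : w = x ∨ w = y := by
          rcases hpc w (p.snd_mem_support_of_mem_edges hep) with h | h | h
          · exact Or.inl h
          · exact Or.inr h
          · rcases hqc w (q.snd_mem_support_of_mem_edges heq) with h' | h' | h'
            · exact Or.inr h'
            · exact Or.inl h'
            · exact (hAB w h h').elim
        have huw : G.Adj u w := p.adj_of_mem_edges hep
        rcases hu with rfl | rfl <;> rcases hw with rfl | rfl
        · exact G.irrefl huw
        · exact hnadjxy huw
        · exact hnadjxy huw.symm
        · exact G.irrefl huw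
      have hxptail : x ∉ p.support.tail :=
        (List.nodup_cons.1 (p.support_eq_cons ▸ hp_path.support_nodup)).1
      have hyqtail : y ∉ q.support.tail :=
        (List.nodup_cons.1 (q.support_eq_cons ▸ hq_path.support_nodup)).1
      have hcyc : c.IsCycle := by
        refine ⟨⟨⟨?_⟩, ?_⟩, ?_⟩
        · rw [hc, Walk.edges_append]
          exact List.Nodup.append hp_path.isTrail.edges_nodup hq_path.isTrail.edges_nodup
            hdisj_edges
        · intro h
          have : c.length = 0 := by rw [h]; rfl
          omega
        · have hsupp : c.support.tail = p.support.tail ++ q.support.tail := by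
            rw [hc, Walk.support_append, p.support_eq_cons]
            simp
          rw [hsupp]
          refine List.Nodup.append ?_ ?_ ?_
          · exact (List.nodup_cons.1 (p.support_eq_cons ▸ hp_path.support_nodup)).2
          · exact (List.nodup_cons.1 (q.support_eq_cons ▸ hq_path.support_nodup)).2
          · intro z hz1 hz2
            rcases hpc z (List.mem_of_mem_tail hz1) with rfl | rfl | h
            · exact hxptail hz1
            · exact hyqtail hz2
            · rcases hqc z (List.mem_of_mem_tail hz2) with rfl | rfl | h'
              · exact hyA h
              · exact hxA h
              · exact hAB z h h'
      obtain ⟨α, β, hαs, hβs, hadj, hne_edge⟩ := hch c hcyc (by omega)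
      have hclass : ∀ z ∈ c.support, z = x ∨ z = y ∨ z ∈ A ∨ z ∈ B := by
        intro z hz
        rcases (Walk.mem_support_append_iff _ _).1 hz with h | h
        · rcases hpc z h with h | h | h
          · exact Or.inl h
          · exact Or.inr (Or.inl h)
          · exact Or.inr (Or.inr (Or.inl h))
        · rcases hqc z h with h | h | h
          · exact Or.inr (Or.inl h)
          · exact Or.inl h
          · exact Or.inr (Or.inr (Or.inr h))
      have hpmem : ∀ z, z ∈ A → z ∈ c.support → z ∈ p.support := by
        intro z hz hzc
        rcases (Walk.mem_support_append_iff _ _).1 hzc with h | h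
        · exact h
        · rcases hqc z h with rfl | rfl | h'
          · exact absurd hz hyA
          · exact absurd hz hxA
          · exact (hAB z hz h').elim
      have hqmem : ∀ z, z ∈ B → z ∈ c.support → z ∈ q.support := by
        intro z hz hzc
        rcases (Walk.mem_support_append_iff _ _).1 hzc with h | h
        · rcases hpc z h with rfl | rfl | h'
          · exact absurd hz hxB
          · exact absurd hz hyB
          · exact (hAB z h' hz).elim
        · exact h
      have hchordp : ∀ {γ δ : V}, γ ∈ p.support → δ ∈ p.support → G.Adj γ δ →
          s(γ, δ) ∈ c.edges := by
        intro γ δ h1 h2 had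
        have hminp : ∀ r : G.Walk x y, (∀ z ∈ r.support, z ∈ p.support) →
            p.length ≤ r.length := fun r hr => hpmin r (fun z hz => hpc z (hr z hz))
        have := mem_edges_of_min hminp h1 h2 had
        rw [hc, Walk.edges_append]
        exact List.mem_append.2 (Or.inl this)
      have hchordq : ∀ {γ δ : V}, γ ∈ q.support → δ ∈ q.support → G.Adj γ δ →
          s(γ, δ) ∈ c.edges := by
        intro γ δ h1 h2 had
        have hminq : ∀ r : G.Walk y x, (∀ z ∈ r.support, z ∈ q.support) →
            q.length ≤ r.length := fun r hr => hqmin r (fun z hz => hqc z (hr z hz))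
        have := mem_edges_of_min hminq h1 h2 had
        rw [hc, Walk.edges_append]
        exact List.mem_append.2 (Or.inr this)
      rcases hclass α hαs with rfl | rfl | hα | hα <;> rcases hclass β hβs with rfl | rfl | hβ | hβ
      · exact G.irrefl hadj
      · exact hnadjxy hadj
      · exact hne_edge (hchordp p.start_mem_support (hpmem β hβ hβs) hadj)
      · exact hne_edge (hchordq q.end_mem_support (hqmem β hβ hβs) hadj)
      · exact hnadjxy hadj.symm
      · exact G.irrefl hadj
      · exact hne_edge (hchordp p.end_mem_support (hpmem β hβ hβs) hadj)
      · exact hne_edge (hchordq q.start_mem_support (hqmem β hβ hβs) hadj)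
      · exact hne_edge (hchordp (hpmem α hα hαs) p.start_mem_support hadj)
      · exact hne_edge (hchordp (hpmem α hα hαs) p.end_mem_support hadj)
      · exact hne_edge (hchordp (hpmem α hα hαs) (hpmem β hβ hβs) hadj)
      · exact hABadj α hα β hβ hadj
      · exact hne_edge (hchordq (hqmem α hα hαs) q.end_mem_support hadj)
      · exact hne_edge (hchordq (hqmem α hα hαs) q.start_mem_support hadj)
      · exact hABadj β hβ α hα hadj.symm
      · exact hne_edge (hchordq (hqmem α hα hαs) (hqmem β hβ hβs) hadj)
    -- from each side of the separator, a simplicial vertex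
    have hside : ∀ (C : Set V) (d : V), d ∈ W → d ∉ C → d ∉ S →
        (∀ u ∈ C, u ∈ W ∧ u ∉ S) → (∀ u ∈ C, ∀ z, G.Adj u z → z ∈ W → z ∉ S → z ∈ C) →
        C.Nonempty → ∃ x ∈ C, SimpIn G W x := by
      rintro C d hdW hdC hdS hCW hCstep ⟨c0, hc0⟩
      have hsub : C ∪ S ⊆ W := by
        rintro u (h | h)
        · exact (hCW u h).1
        · exact hSW h
      have hdCS : d ∉ C ∪ S := fun h => h.elim hdC hdS
      have hnbr : ∀ u ∈ C, ∀ z, z ∈ W → G.Adj u z → z ∈ C ∪ S := by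
        intro u hu z hz hadj
        by_cases hzS : z ∈ S
        · exact Or.inr hzS
        · exact Or.inl (hCstep u hu z hadj hz hzS)
      by_cases hclq : G.IsClique (C ∪ S)
      · refine ⟨c0, hc0, fun y z hyW hzW hady hadz hne => ?_⟩
        exact hclq (hnbr c0 hc0 y hyW hady) (hnbr c0 hc0 z hzW hadz) hne
      · have hlt : (C ∪ S).ncard < W.ncard := by
          exact Set.ncard_lt_ncard ⟨hsub, fun h => hdCS (h hdW)⟩ W.toFinite
        obtain ⟨x1, y1, hx1, hy1, hne1, hnadj1, hs1, hs2⟩ :=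
          ih (C ∪ S) (by omega) hclq
        have hone : x1 ∈ C ∨ y1 ∈ C := by
          by_contra hcon
          push_neg at hcon
          have hx1S : x1 ∈ S := hx1.resolve_left hcon.1
          have hy1S : y1 ∈ S := hy1.resolve_left hcon.2
          exact hnadj1 (hSclique hx1S hy1S hne1)
        have hlift : ∀ w1 ∈ C, SimpIn G (C ∪ S) w1 → ∃ x ∈ C, SimpIn G W x := by
          intro w1 hw1 hsimp
          refine ⟨w1, hw1, fun y z hyW hzW hady hadz hne => ?_⟩
          exact hsimp (hnbr w1 hw1 y hyW hady) (hnbr w1 hw1 z hzW hadz) hady hadz hne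
        rcases hone with h | h
        · exact hlift x1 h hs1
        · exact hlift y1 h hs2
    have hbA : b ∉ A := fun h => hAB b h hbB
    have haB : a ∉ B := fun h => hAB a haA h
    obtain ⟨x1, hx1A, hx1⟩ := hside A b hbW hbA hbS hAW hAstep ⟨a, haA⟩
    obtain ⟨y1, hy1B, hy1⟩ := hside B a haW haB haS hBW hBstep ⟨b, hbB⟩
    exact ⟨x1, y1, (hAW _ hx1A).1, (hBW _ hy1B).1,
      fun h => hAB x1 hx1A (h ▸ hy1B),
      fun h => hABadj x1 hx1A y1 hy1B h, hx1, hy1⟩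

/-- A non-isolated simplicial vertex of the neighborhood of `v` yields an exposed edge. -/
lemma exposed_of_simpIn {G : SimpleGraph V} {v w : V} (hadj : G.Adj v w)
    (hsimp : SimpIn G (G.neighborSet v) w)
    (hnon : ∃ u, u ∈ G.neighborSet v ∧ G.Adj w u) : IsExposedEdge G v w := by
  set Q : Set V := insert v (insert w {z | G.Adj v z ∧ G.Adj w z}) with hQ
  have hvQ : v ∈ Q := Set.mem_insert _ _
  have hwQ : w ∈ Q := Set.mem_insert_of_mem _ (Set.mem_insert _ _)
  have hclQ : G.IsClique Q := by
    intro p hp q hq hne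
    rcases hp with rfl | hp <;> rcases hq with rfl | hq
    · exact absurd rfl hne
    · rcases hq with rfl | hq
      · exact hadj
      · exact hq.1
    · rcases hp with rfl | hp
      · exact hadj.symm
      · exact hp.1.symm
    · rcases hp with rfl | hp <;> rcases hq with rfl | hq
      · exact absurd rfl hne
      · exact hq.2
      · exact hp.2.symm
      · exact hsimp hp.1 hq.1 hp.2 hq.2 hne
  have hmaxQ : ∀ t : Set V, G.IsClique t → v ∈ t → w ∈ t → t ⊆ Q := by
    intro t ht hvt hwt u hu
    by_cases huv : u = v
    · exact huv ▸ hvQ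
    by_cases huw : u = w
    · exact huw ▸ hwQ
    exact Set.mem_insert_of_mem _ (Set.mem_insert_of_mem _
      ⟨(ht hvt hu (Ne.symm huv)), (ht hwt hu (Ne.symm huw))⟩)
  have hQmax : IsMaxClique G Q :=
    ⟨hclQ, fun t ht hsub => Set.Subset.antisymm (hmaxQ t ht (hsub hvQ) (hsub hwQ)) hsub⟩
  obtain ⟨u0, hu0N, hu0w⟩ := hnon
  have hu0Q : u0 ∈ Q := Set.mem_insert_of_mem _ (Set.mem_insert_of_mem _ ⟨hu0N, hu0w⟩)
  refine ⟨hadj, ⟨Q, ⟨hQmax, hvQ, hwQ⟩, ?_⟩, ?_⟩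
  · rintro s' ⟨hs', hv', hw'⟩
    exact (hs'.2 Q hclQ (hmaxQ s' hs'.1 hv' hw')).symm
  · rintro ⟨-, hpair⟩
    have := hpair.2 Q hclQ (by
      intro z hz
      rcases hz with rfl | hz
      · exact hvQ
      · exact Set.mem_singleton_iff.1 hz ▸ hwQ)
    rw [this] at hu0Q
    rcases hu0Q with rfl | hu0Q
    · exact G.irrefl hu0N
    · exact G.irrefl (Set.mem_singleton_iff.1 hu0Q ▸ hu0w)


end ChordalAuxiliary

/-- If a vertex `v` of a finite chordal graph belongs to a maximal clique of size at
least three, then `v` is incident on at least two distinct exposed edges. -/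
theorem two_exposed_edges_at_vertex [Fintype V] (G : SimpleGraph V)
    (hchord : IsChordal G) (v : V) (s : Set V)
    (hs : IsMaxClique G s) (hv : v ∈ s) (hcard : 3 ≤ s.ncard) :
    ∃ w₁ w₂ : V, w₁ ≠ w₂ ∧ IsExposedEdge G v w₁ ∧ IsExposedEdge G v w₂ := by
  classical
  set W : Set V := G.neighborSet v with hWdef
  -- two distinct neighbors of `v` inside `s`
  have hcard2 : 2 ≤ (s \ {v}).ncard := by
    have := Set.ncard_diff_singleton_add_one hv s.toFinite
    omega
  obtain ⟨u₁, hu₁, u₂, hu₂, hu12⟩ := (Set.one_lt_ncard (s \ {v}).toFinite).1 (by omega)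
  have hu₁s : u₁ ∈ s := hu₁.1
  have hu₂s : u₂ ∈ s := hu₂.1
  have hu₁v : u₁ ≠ v := by simpa using hu₁.2
  have hu₂v : u₂ ≠ v := by simpa using hu₂.2
  have hvu₁ : G.Adj v u₁ := hs.1 hv hu₁s (Ne.symm hu₁v)
  have hvu₂ : G.Adj v u₂ := hs.1 hv hu₂s (Ne.symm hu₂v)
  have hu₁W : u₁ ∈ W := hvu₁
  have hu₂W : u₂ ∈ W := hvu₂
  have hadj12 : G.Adj u₁ u₂ := hs.1 hu₁s hu₂s hu12
  set K : Set V := {u | ReachIn G W u₁ u} with hKdef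
  have hKW : ∀ u ∈ K, u ∈ W := fun u hu => ReachIn.mem_right hu
  have hu₁K : u₁ ∈ K := ReachIn.refl hu₁W
  have hu₂K : u₂ ∈ K := ReachIn.step hu₁K hadj12 hu₂W
  have hKstep : ∀ u ∈ K, ∀ z, G.Adj u z → z ∈ W → z ∈ K :=
    fun u hu z ha hz => ReachIn.step hu ha hz
  have hlift : ∀ x ∈ K, SimpIn G K x → SimpIn G W x := by
    intro x hx hsimp y z hyW hzW ha1 ha2 hne
    exact hsimp (hKstep x hx y ha1 hyW) (hKstep x hx z ha2 hzW) ha1 ha2 hne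
  have hnbr : ∀ x ∈ K, ∃ u, u ∈ W ∧ G.Adj x u := by
    intro x hx
    by_cases hxu : x = u₁
    · exact ⟨u₂, hu₂W, hxu ▸ hadj12⟩
    · obtain ⟨p, hp⟩ := hx
      obtain ⟨z, q, hadjz, hq, -⟩ := exists_last_step (Ne.symm hxu) p
      exact ⟨z, hp z (hq z q.end_mem_support), hadjz⟩
  have hmain : ∃ x y, x ∈ K ∧ y ∈ K ∧ x ≠ y ∧ SimpIn G K x ∧ SimpIn G K y := by
    by_cases hclq : G.IsClique K
    · refine ⟨u₁, u₂, hu₁K, hu₂K, hadj12.ne, ?_, ?_⟩ <;>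
        (intro y z hy hz _ _ hne; exact hclq hy hz hne)
    · obtain ⟨x, y, hx, hy, hne, -, h1, h2⟩ := dirac_aux hchord K.ncard K le_rfl hclq
      exact ⟨x, y, hx, hy, hne, h1, h2⟩
  obtain ⟨x, y, hxK, hyK, hne, hsx, hsy⟩ := hmain
  refine ⟨x, y, hne, ?_, ?_⟩
  · exact exposed_of_simpIn (hKW x hxK) (hlift x hxK hsx) (hnbr x hxK)
  · exact exposed_of_simpIn (hKW y hyK) (hlift y hyK hsy) (hnbr y hyK)
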